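/- Let k ∈ ℂ with k ≠ 0 and Re(k) ≠ 0, B a d×d complex matrix, ℓ ∈ ℂ, and M = [[ℓB/(2k), ℓ·conj(B)/(k+conj(k))],[conj(ℓ)B/(k+conj(k)), conj(ℓ)·conj(B)/(2·conj(k))]]. Assume I₂d + M² is invertible. Then the d×d matrix V = (B conj(B))·(I₂d + M²)⁻¹·col(ℓI_d, conj(ℓ)I_d) is real, i.e. V equals its entrywise complex conjugate. -/

import Mathlib

open Matrix

theorem stmt_13 {d : ℕ} (k ℓ : ℂ) (hk : k ≠ 0) (hre : k.re ≠ 0)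
    (B : Matrix (Fin d) (Fin d) ℂ)
    (M : Matrix (Fin d ⊕ Fin d) (Fin d ⊕ Fin d) ℂ)
    (hM : M = fromBlocks ((ℓ/(2*k)) • B)
                          ((ℓ/(k + (starRingEnd ℂ) k)) • B.map (starRingEnd ℂ))
                          (((starRingEnd ℂ) ℓ/(k + (starRingEnd ℂ) k)) • B)
                          (((starRingEnd ℂ) ℓ/(2 * (starRingEnd ℂ) k)) • B.map (starRingEnd ℂ)))
    (hMu : IsUnit (1 + M ^ 2))
    (V : Matrix (Fin d) (Fin d) ℂ)
    (hV : V = fromCols B (B.map (starRingEnd ℂ)) * (1 + M ^ 2)⁻¹ *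
              fromRows (ℓ • (1 : Matrix (Fin d) (Fin d) ℂ)) ((starRingEnd ℂ) ℓ • 1)) :
    V = V.map (starRingEnd ℂ) := by
  set c := starRingEnd ℂ with hc
  set D : Matrix (Fin d ⊕ Fin d) (Fin d ⊕ Fin d) ℂ := fromBlocks 0 1 1 0 with hD
  have hD2 : D * D = 1 := by
    simp [hD, fromBlocks_multiply, ← fromBlocks_one]
  have hDMD : M.map c = D * M * D := by
    subst hM
    ext (i|i) (j|j) <;>
      · simp [hD, fromBlocks_multiply, Matrix.map_apply, map_div₀, map_ofNat, hc,
          Complex.conj_conj, mul_comm, add_comm]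
  have hA : (1 + M ^ 2).map c = D * (1 + M ^ 2) * D := by
    have e : (1 + M ^ 2).map c = 1 + (M.map c) ^ 2 := by
      ext i j
      simp [Matrix.map_apply, Matrix.add_apply, pow_two, Matrix.mul_apply, Matrix.one_apply,
        apply_ite, map_sum]
    have h2 : (D * M * D) ^ 2 = D * M ^ 2 * D := by
      rw [pow_two, pow_two]
      rw [show D * M * D * (D * M * D) = D * (M * (D * D) * M) * D by
        simp only [mul_assoc]]
      rw [hD2]
      simp only [mul_one, mul_assoc]
    rw [e, hDMD, h2, mul_add, add_mul, mul_one, hD2]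
  set N := (1 + M ^ 2)⁻¹ with hN
  have hdet : IsUnit (1 + M ^ 2).det := (isUnit_iff_isUnit_det _).mp hMu
  have h1 : (1 + M ^ 2) * N = 1 := mul_nonsing_inv _ hdet
  have hmap1 : (1 + M ^ 2).map c * N.map c = 1 := by
    have := congrArg (fun X : Matrix (Fin d ⊕ Fin d) (Fin d ⊕ Fin d) ℂ => X.map c) h1
    simpa using this
  have hmap2 : (1 + M ^ 2).map c * (D * N * D) = 1 := by
    rw [hA]
    rw [show D * (1 + M ^ 2) * D * (D * N * D) = D * ((1 + M ^ 2) * (D * D) * N) * D by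
      simp only [mul_assoc]]
    rw [hD2]
    simp [h1, hD2, ← mul_assoc]
  have hNc : N.map c = D * N * D := by
    rw [← inv_eq_right_inv hmap1, ← inv_eq_right_inv hmap2]
  have hC : (fromCols B (B.map c)).map c = fromCols B (B.map c) * D := by
    rw [hD, fromCols_mul_fromBlocks]
    ext i (j|j) <;> simp [Matrix.map_apply, fromCols, hc]
  have hR : (fromRows (ℓ • (1 : Matrix (Fin d) (Fin d) ℂ)) (c ℓ • 1)).map c
      = D * (fromRows (ℓ • (1 : Matrix (Fin d) (Fin d) ℂ)) (c ℓ • 1) : Matrix (Fin d ⊕ Fin d) (Fin d) ℂ) := by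
    rw [hD, fromBlocks_mul_fromRows]
    ext (i|i) j <;> by_cases h : i = j <;>
      simp [Matrix.map_apply, Matrix.one_apply, h, hc]
  replace hV : V = fromCols B (B.map c) * N *
      (fromRows (ℓ • (1 : Matrix (Fin d) (Fin d) ℂ)) (c ℓ • 1) : Matrix (Fin d ⊕ Fin d) (Fin d) ℂ) := hV
  have hVmap : V.map c = fromCols B (B.map c) * D * (D * N * D) *
      (D * (fromRows (ℓ • (1 : Matrix (Fin d) (Fin d) ℂ)) (c ℓ • 1) : Matrix (Fin d ⊕ Fin d) (Fin d) ℂ)) := by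
    rw [hV, Matrix.map_mul, Matrix.map_mul, hC, hNc, hR]
  rw [hVmap, hV]
  rw [show fromCols B (B.map c) * D * (D * N * D) *
      (D * (fromRows (ℓ • (1 : Matrix (Fin d) (Fin d) ℂ)) (c ℓ • 1) : Matrix (Fin d ⊕ Fin d) (Fin d) ℂ))
    = fromCols B (B.map c) * ((D * D) * N * (D * D)) *
      (fromRows (ℓ • (1 : Matrix (Fin d) (Fin d) ℂ)) (c ℓ • 1) : Matrix (Fin d ⊕ Fin d) (Fin d) ℂ) by
      simp only [Matrix.mul_assoc]]
  simp [hD2]
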